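/- Let H be a Hilbert space (or Banach space) with orthonormal (or unconditional) basis (eₙ), let σ : ℕ → ℕ be injective, and let T be a bounded operator with Teₙ = wₙ e_{σ(n)} for scalars wₙ. Then there exists a non-scalar bounded projection P (P² = P, P ≠ 0, P ≠ I) such that T²P = PT². -/

import Mathlib

open Function

private lemma iter_cancel {σ : ℕ → ℕ} (hσ : Function.Injective σ) {a b : ℕ} {x y : ℕ}
    (hab : a ≤ b) (h : σ^[a] x = σ^[b] y) : x = σ^[b - a] y := by
  have : σ^[a] x = σ^[a] (σ^[b - a] y) := by
    rw [← Function.iterate_add_apply, Nat.add_sub_cancel' hab]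
    exact h
  exact hσ.iterate a this

private lemma exists_invariant_set (σ : ℕ → ℕ) (hσ : Function.Injective σ) :
    ∃ B : Set ℕ, B.Nonempty ∧ B ≠ Set.univ ∧ ∀ n, n ∈ B ↔ σ (σ n) ∈ B := by
  classical
  set GO : Set ℕ := {n | ∃ k l, σ^[k] n = σ^[l] 0} with hGO
  by_cases hU : GO = Set.univ
  · -- single grand orbit: use parity
    refine ⟨{n | ∃ k l, σ^[k] n = σ^[l] 0 ∧ (k + l) % 2 = 0}, ⟨0, 0, 0, rfl, rfl⟩, ?_, ?_⟩
    · -- proper: σ 0 ∉ B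
      intro hB
      have hσ0 : σ 0 ∈ ({n | ∃ k l, σ^[k] n = σ^[l] 0 ∧ (k + l) % 2 = 0} : Set ℕ) := by
        rw [hB]; trivial
      obtain ⟨k, l, hkl, hpar⟩ := hσ0
      have hk1 : σ^[k + 1] 0 = σ^[l] 0 := by
        rw [Function.iterate_add_apply]; simpa using hkl
      have hne : k + 1 ≠ l := by
        intro h; omega
      -- derive a periodic point with period d ≥ 1
      obtain ⟨d, hd1, hper⟩ : ∃ d, 1 ≤ d ∧ σ^[d] 0 = 0 := by
        rcases le_total (k + 1) l with h | h
        · refine ⟨l - (k + 1), by omega, ?_⟩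
          exact (iter_cancel hσ h hk1).symm
        · refine ⟨k + 1 - l, by omega, ?_⟩
          exact (iter_cancel hσ h hk1.symm).symm
      -- every point is σ^[j] 0 for some j < d
      have hmulfix : ∀ c, σ^[d * c] 0 = 0 := by
        intro c
        rw [Function.iterate_mul]
        exact Function.iterate_fixed hper c
      have hall : ∀ m : ℕ, ∃ j, m = σ^[j] 0 := by
        intro m
        have hm : m ∈ GO := by rw [hU]; trivial
        obtain ⟨k', l', hkl'⟩ := hm
        set l'' := l' + d * (k' + 1) with hl''
        have hge : k' ≤ l'' := by
          have : k' + 1 ≤ d * (k' + 1) := by nlinarith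
          omega
        have h2 : σ^[k'] m = σ^[l''] 0 := by
          rw [hl'', Function.iterate_add_apply, hmulfix]
          exact hkl'
        exact ⟨l'' - k', iter_cancel hσ hge h2⟩
      have hsurj : Function.Surjective (fun j : Fin d => σ^[(j : ℕ)] 0) := by
        intro m
        obtain ⟨j, hj⟩ := hall m
        refine ⟨⟨j % d, Nat.mod_lt _ (by omega)⟩, ?_⟩
        simp only
        have : σ^[j] 0 = σ^[j % d] 0 := by
          conv_lhs => rw [← Nat.mod_add_div j d, Function.iterate_add_apply,
            hmulfix]
        rw [← this, hj]
      have : Finite ℕ := Finite.of_surjective _ hsurj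
      exact not_finite ℕ
    · intro n
      constructor
      · rintro ⟨k, l, h, hp⟩
        refine ⟨k, l + 2, ?_, by omega⟩
        have : σ^[k] (σ (σ n)) = σ^[k + 2] n := by
          rw [Function.iterate_add_apply]; rfl
        rw [this, add_comm k 2, Function.iterate_add_apply, h,
          ← Function.iterate_add_apply, add_comm 2 l]
      · rintro ⟨k, l, h, hp⟩
        refine ⟨k + 2, l, ?_, by omega⟩
        rw [Function.iterate_add_apply]
        exact h
  · -- grand orbit of 0 is proper
    refine ⟨GO, ⟨0, 0, 0, rfl⟩, hU, ?_⟩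
    intro n
    constructor
    · rintro ⟨k, l, h⟩
      refine ⟨k, l + 2, ?_⟩
      have : σ^[k] (σ (σ n)) = σ^[k + 2] n := by
        rw [Function.iterate_add_apply]; rfl
      rw [this, add_comm k 2, Function.iterate_add_apply, h,
        ← Function.iterate_add_apply, add_comm 2 l]
    · rintro ⟨k, l, h⟩
      refine ⟨k + 2, l, ?_⟩
      rw [Function.iterate_add_apply]
      exact h

/-- If `T` is a weighted shift-type operator `T eₙ = wₙ e_{σ(n)}` with `σ` injective, on a
Hilbert space with orthonormal basis `(eₙ)`, then `T²` commutes with a non-scalar bounded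
projection. -/
theorem stmt7 {H : Type*} [NormedAddCommGroup H] [InnerProductSpace ℂ H]
    [CompleteSpace H] (e : HilbertBasis ℕ ℂ H)
    (σ : ℕ → ℕ) (hσ : Function.Injective σ) (w : ℕ → ℂ)
    (T : H →L[ℂ] H) (hT : ∀ n : ℕ, T (e n) = w n • e (σ n)) :
    ∃ P : H →L[ℂ] H, P ∘L P = P ∧ P ≠ 0 ∧ P ≠ 1 ∧
      (T ∘L T) ∘L P = P ∘L (T ∘L T) := by
  classical
  obtain ⟨B, ⟨b, hb⟩, hBne, hBinv⟩ := exists_invariant_set σ hσ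
  obtain ⟨m, hm⟩ : ∃ m, m ∉ B := by
    by_contra h
    push_neg at h
    exact hBne (Set.eq_univ_of_forall h)
  set K : Submodule ℂ H := (Submodule.span ℂ (e '' B)).topologicalClosure with hK
  haveI : CompleteSpace K :=
    (Submodule.isClosed_topologicalClosure _).completeSpace_coe
  set P : H →L[ℂ] H := K.subtypeL ∘L (K.orthogonalProjectionOnto) with hP
  -- P fixes basis vectors in B
  have hmemK : ∀ n ∈ B, (e n : H) ∈ K :=
    fun n hn => Submodule.le_topologicalClosure _ (Submodule.subset_span ⟨n, hn, rfl⟩)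
  have hPB : ∀ n ∈ B, P (e n) = e n := by
    intro n hn
    exact Submodule.starProjection_eq_self_iff.mpr (hmemK n hn)
  -- P kills basis vectors outside B
  have hperp : ∀ n ∉ B, (e n : H) ∈ Kᗮ := by
    intro n hn
    have hker : K ≤ (innerSL ℂ (e n)).ker := by
      apply Submodule.topologicalClosure_minimal
      · rw [Submodule.span_le]
        rintro x ⟨j, hj, rfl⟩
        have hne : n ≠ j := fun h => hn (h ▸ hj)
        simpa [LinearMap.mem_ker] using e.orthonormal.2 hne
      · exact ContinuousLinearMap.isClosed_ker (innerSL ℂ (e n))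
    rw [Submodule.mem_orthogonal']
    intro u hu
    exact hker hu
  have hPnB : ∀ n ∉ B, P (e n) = 0 := by
    intro n hn
    have := Submodule.orthogonalProjectionOnto_eq_zero_iff.mpr (hperp n hn)
    simp [hP, this]
  have hidem : P ∘L P = P := by
    ext x
    simp only [ContinuousLinearMap.comp_apply, hP, Submodule.subtypeL_apply]
    congr 1
    exact Submodule.orthogonalProjectionOnto_mem_subspace_eq_self _
  have enorm : ∀ n : ℕ, (e n : H) ≠ 0 := fun n => e.orthonormal.ne_zero n
  refine ⟨P, hidem, ?_, ?_, ?_⟩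
  · intro h
    have := hPB b hb
    rw [h] at this
    exact enorm b this.symm
  · intro h
    have := hPnB m hm
    rw [h] at this
    exact enorm m (by simpa using this)
  · -- commutation, check on the dense span of the basis
    have hdense : Dense ((Submodule.span ℂ (Set.range e) : Submodule ℂ H) : Set H) := by
      rw [Submodule.dense_iff_topologicalClosure_eq_top]
      exact e.dense_span
    apply ContinuousLinearMap.ext_on hdense
    rintro x ⟨n, rfl⟩
    have hT2 : T (T (e n)) = (w n * w (σ n)) • e (σ (σ n)) := by
      rw [hT n, map_smul, hT (σ n), smul_smul]
    simp only [ContinuousLinearMap.comp_apply]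
    by_cases hn : n ∈ B
    · rw [hPB n hn, hT2, map_smul, hPB _ ((hBinv n).mp hn)]
    · have hσ2 : σ (σ n) ∉ B := fun h => hn ((hBinv n).mpr h)
      rw [hPnB n hn, hT2, map_smul, hPnB _ hσ2, map_zero, map_zero, smul_zero]
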